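/- Let G = {(x,y,z,t) ∈ ℝ⁴ : y²t²−x⁴ = (x²+y²−2t²)⁴, z = 0, |y| ≤ t ≤ 1}. Then there exist ε ∈ (0,1) and a continuous function f : [0,ε) → ℝ with f(0) = 0 and f(t) > 0 for t > 0 such that G ∩ {x = 0, 0 ≤ t < ε} = {(0, y, 0, t) : 0 ≤ t < ε and (y = f(t) or y = −f(t))}, and f(t)/t³ → 4 as t → 0⁺. In particular, the two branches of G over x = 0 have tangency order 3 at the origin. -/

import Mathlib

open Set Metric Filter

noncomputable section
/-- The surface `G` of Example 4 in `ℝ⁴` (coordinates `x = p 0`, `y = p 1`, `z = p 2`,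
`t = p 3`): `y²t² - x⁴ = (x² + y² - 2t²)⁴`, `z = 0`, `|y| ≤ t ≤ 1`. -/
def SurfaceG : Set (EuclideanSpace ℝ (Fin 4)) :=
  {p | p 1 ^ 2 * p 3 ^ 2 - p 0 ^ 4 = (p 0 ^ 2 + p 1 ^ 2 - 2 * p 3 ^ 2) ^ 4 ∧
        p 2 = 0 ∧ |p 1| ≤ p 3 ∧ p 3 ≤ 1}

namespace Ex4

noncomputable def phi (u : ℝ) : ℝ := Real.sqrt (Real.sqrt u) / (2 - u)

lemma phi_zero : phi 0 = 0 := by simp [phi]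
lemma phi_one : phi 1 = 1 := by norm_num [phi]

lemma pow4_inj {a b : ℝ} (ha : 0 ≤ a) (hb : 0 ≤ b) (h : a ^ 4 = b ^ 4) : a = b := by
  rcases lt_trichotomy a b with hlt | he | hgt
  · exact absurd (pow_lt_pow_left₀ hlt ha (n := 4) (by norm_num)) (by rw [h]; exact lt_irrefl _)
  · exact he
  · exact absurd (pow_lt_pow_left₀ hgt hb (n := 4) (by norm_num)) (by rw [h]; exact lt_irrefl _)

lemma sqrt_sqrt_pow4 {u : ℝ} (hu : 0 ≤ u) : Real.sqrt (Real.sqrt u) ^ 4 = u := by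
  have h1 : Real.sqrt (Real.sqrt u) ^ 2 = Real.sqrt u := Real.sq_sqrt (Real.sqrt_nonneg u)
  have h2 : Real.sqrt u ^ 2 = u := Real.sq_sqrt hu
  calc Real.sqrt (Real.sqrt u) ^ 4 = (Real.sqrt (Real.sqrt u) ^ 2) ^ 2 := by ring
    _ = u := by rw [h1, h2]

lemma phi_strictMonoOn : StrictMonoOn phi (Icc 0 1) := by
  intro a ha b hb hab
  have h2a : (0:ℝ) < 2 - a := by linarith [ha.2]
  have h2b : (0:ℝ) < 2 - b := by linarith [hb.2]
  have hn : Real.sqrt (Real.sqrt a) < Real.sqrt (Real.sqrt b) := by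
    apply Real.sqrt_lt_sqrt (Real.sqrt_nonneg _)
    exact Real.sqrt_lt_sqrt ha.1 hab
  have hd : 2 - b ≤ 2 - a := by linarith
  calc phi a = Real.sqrt (Real.sqrt a) / (2 - a) := rfl
    _ ≤ Real.sqrt (Real.sqrt a) / (2 - b) :=
        div_le_div_of_nonneg_left (Real.sqrt_nonneg _) h2b hd
    _ < Real.sqrt (Real.sqrt b) / (2 - b) := div_lt_div_of_pos_right hn h2b
    _ = phi b := rfl

lemma phi_continuousOn : ContinuousOn phi (Icc 0 1) := by
  apply ContinuousOn.div
  · exact (Real.continuous_sqrt.comp Real.continuous_sqrt).continuousOn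
  · exact (continuous_const.sub continuous_id).continuousOn
  · intro u hu h; linarith [hu.2]

lemma phi_mapsTo : MapsTo phi (Icc 0 1) (Icc 0 1) := by
  intro u hu
  constructor
  · rw [← phi_zero]
    rcases eq_or_lt_of_le hu.1 with h | h
    · rw [h]
    · exact (phi_strictMonoOn (by norm_num) hu h).le
  · rw [← phi_one]
    rcases eq_or_lt_of_le hu.2 with h | h
    · rw [h]
    · exact (phi_strictMonoOn hu (by norm_num) h).le

lemma phi_surjOn : SurjOn phi (Icc 0 1) (Icc 0 1) := by
  have h := intermediate_value_Icc (zero_le_one (α := ℝ)) phi_continuousOn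
  rw [phi_zero, phi_one] at h
  exact h

lemma phi_bijOn : BijOn phi (Icc 0 1) (Icc 0 1) :=
  ⟨phi_mapsTo, phi_strictMonoOn.injOn, phi_surjOn⟩


noncomputable def e : (Icc (0:ℝ) 1) ≃ (Icc (0:ℝ) 1) := phi_bijOn.equiv phi

lemma e_coe (u : Icc (0:ℝ) 1) : (e u : ℝ) = phi u := rfl

lemma e_continuous : Continuous (e : (Icc (0:ℝ) 1) → (Icc (0:ℝ) 1)) := by
  rw [continuous_induced_rng]
  exact phi_continuousOn.comp_continuous continuous_subtype_val (fun x => x.2)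

noncomputable def h : (Icc (0:ℝ) 1) ≃ₜ (Icc (0:ℝ) 1) := e_continuous.homeoOfEquivCompactToT2

noncomputable def psi (t : ℝ) : ℝ := (h.symm (projIcc 0 1 zero_le_one t) : ℝ)

lemma psi_continuous : Continuous psi :=
  continuous_subtype_val.comp (h.symm.continuous.comp continuous_projIcc)

lemma psi_mem (t : ℝ) : psi t ∈ Icc (0:ℝ) 1 := (h.symm (projIcc 0 1 zero_le_one t)).2

lemma phi_psi {t : ℝ} (ht : t ∈ Icc (0:ℝ) 1) : phi (psi t) = t := by
  have : e (h.symm (projIcc 0 1 zero_le_one t)) = projIcc 0 1 zero_le_one t :=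
    h.apply_symm_apply _
  have h2 := congrArg Subtype.val this
  rw [e_coe] at h2
  rw [psi, h2, projIcc_of_mem zero_le_one ht]

lemma psi_phi {u : ℝ} (hu : u ∈ Icc (0:ℝ) 1) : psi (phi u) = u :=
  phi_strictMonoOn.injOn (psi_mem _) hu (phi_psi (phi_mapsTo hu))

lemma psi_zero : psi 0 = 0 := by
  have := psi_phi (u := 0) (by norm_num)
  rwa [phi_zero] at this

lemma psi_pos {t : ℝ} (ht : 0 < t) (ht1 : t ≤ 1) : 0 < psi t := by
  rcases eq_or_lt_of_le (psi_mem t).1 with h0 | h0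
  · exfalso
    have := phi_psi (t := t) ⟨ht.le, ht1⟩
    rw [← h0, phi_zero] at this
    linarith
  · exact h0

lemma key {t : ℝ} (ht : t ∈ Icc (0:ℝ) 1) : t ^ 4 * (2 - psi t) ^ 4 = psi t := by
  set u := psi t with hu
  have hmem := psi_mem t
  have h2u : (0:ℝ) < 2 - u := by linarith [hmem.2]
  have hp := phi_psi ht
  rw [phi] at hp
  have hs : Real.sqrt (Real.sqrt u) = t * (2 - u) := by
    exact (div_eq_iff (ne_of_gt h2u)).1 hp
  have := sqrt_sqrt_pow4 hmem.1
  rw [hs] at this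
  linarith [this, mul_pow t (2-u) 4]


noncomputable def f (t : ℝ) : ℝ := t * Real.sqrt (psi t)

lemma f_continuous : Continuous f :=
  continuous_id.mul (Real.continuous_sqrt.comp psi_continuous)

lemma f_zero : f 0 = 0 := by simp [f]

lemma f_pos {t : ℝ} (ht : 0 < t) (ht1 : t ≤ 1) : 0 < f t :=
  mul_pos ht (Real.sqrt_pos.2 (psi_pos ht ht1))

lemma f_sq {t : ℝ} : f t ^ 2 = t ^ 2 * psi t := by
  rw [f, mul_pow, Real.sq_sqrt (psi_mem t).1]

lemma f_le {t : ℝ} (ht : 0 ≤ t) : f t ≤ t := by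
  calc f t = t * Real.sqrt (psi t) := rfl
    _ ≤ t * 1 := by
        apply mul_le_mul_of_nonneg_left _ ht
        exact Real.sqrt_le_one.2 (psi_mem t).2
    _ = t := mul_one t

lemma f_nonneg {t : ℝ} (ht : 0 ≤ t) : 0 ≤ f t :=
  mul_nonneg ht (Real.sqrt_nonneg _)

lemma f_eq_abs {t y : ℝ} (ht : 0 < t) (ht1 : t ≤ 1)
    (hyt : |y| ≤ t) (heq : y ^ 2 * t ^ 2 = (y ^ 2 - 2 * t ^ 2) ^ 4) : f t = |y| := by
  set u := y ^ 2 / t ^ 2 with hudef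
  have ht2 : (0:ℝ) < t ^ 2 := by positivity
  have hy2 : y ^ 2 = u * t ^ 2 := by rw [hudef, div_mul_cancel₀ _ (ne_of_gt ht2)]
  have hu0 : 0 ≤ u := by positivity
  have hu1 : u ≤ 1 := by
    rw [div_le_one ht2]
    calc y ^ 2 = |y| ^ 2 := (sq_abs y).symm
      _ ≤ t ^ 2 := pow_le_pow_left₀ (abs_nonneg y) hyt 2
  have hu : u ∈ Icc (0:ℝ) 1 := ⟨hu0, hu1⟩
  -- derive u = t^4 * (2-u)^4
  have h1 : (u * t ^ 2) * t ^ 2 = ((u * t ^ 2) - 2 * t ^ 2) ^ 4 := by rw [← hy2]; exact heq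
  have ht4 : t ^ 4 ≠ 0 := pow_ne_zero _ (ne_of_gt ht)
  have h2 : u = t ^ 4 * (2 - u) ^ 4 := by
    apply mul_right_cancel₀ ht4
    linear_combination h1
  -- show phi u = t
  have h2u : (0:ℝ) < 2 - u := by linarith
  have hs : Real.sqrt (Real.sqrt u) = t * (2 - u) := by
    apply pow4_inj (Real.sqrt_nonneg _) (by positivity)
    rw [sqrt_sqrt_pow4 hu0, mul_pow]
    linarith [h2]
  have hphi : phi u = t := by
    rw [phi, hs, mul_div_assoc, div_self (ne_of_gt h2u), mul_one]
  have hpsi : psi t = u := by rw [← hphi, psi_phi hu]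
  rw [f, hpsi, hudef, Real.sqrt_div (sq_nonneg y), Real.sqrt_sq_eq_abs, Real.sqrt_sq_eq_abs,
    abs_of_pos ht]
  field_simp


lemma f_div_cube {t : ℝ} (ht : 0 < t) (ht1 : t ≤ 1) : f t / t ^ 3 = (2 - psi t) ^ 2 := by
  have hk := key (t := t) ⟨ht.le, ht1⟩
  have hs : Real.sqrt (psi t) = t ^ 2 * (2 - psi t) ^ 2 := by
    have h2 : (t ^ 2 * (2 - psi t) ^ 2) ^ 2 = psi t := by linear_combination hk
    conv_lhs => rw [← h2]
    rw [Real.sqrt_sq (by positivity)]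
  rw [f, hs]
  have ht3 : t ^ 3 ≠ 0 := pow_ne_zero _ (ne_of_gt ht)
  field_simp

end Ex4

/-- near the origin, the slice of `G` by `{x = 0}` consists of the two
branches `y = ±f(t)` for a continuous function `f` with `f(0) = 0`, `f(t) > 0` for `t > 0`,
and `f(t)/t³ → 4` as `t → 0⁺`; so the two branches of `G` over `x = 0` have tangency
order `3` at the origin. -/
theorem surfaceG_branches_tangency_order_three :
    ∃ ε : ℝ, 0 < ε ∧ ε < 1 ∧
      ∃ f : ℝ → ℝ, ContinuousOn f (Set.Ico 0 ε) ∧ f 0 = 0 ∧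
        (∀ t : ℝ, 0 < t → t < ε → 0 < f t) ∧
        SurfaceG ∩ {p | p 0 = 0 ∧ p 3 < ε} =
          {p : EuclideanSpace ℝ (Fin 4) | p 0 = 0 ∧ p 2 = 0 ∧ 0 ≤ p 3 ∧ p 3 < ε ∧
            (p 1 = f (p 3) ∨ p 1 = -f (p 3))} ∧
        Tendsto (fun t : ℝ => f t / t ^ 3) (nhdsWithin 0 (Set.Ioi (0 : ℝ))) (nhds 4) := by
  refine ⟨1/2, by norm_num, by norm_num, Ex4.f, Ex4.f_continuous.continuousOn, Ex4.f_zero,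
    fun t ht hte => Ex4.f_pos ht (by linarith), ?_, ?_⟩
  · ext p
    unfold SurfaceG
    simp only [mem_inter_iff, mem_setOf_eq]
    constructor
    · rintro ⟨⟨heq, hz, hyt, ht1⟩, hx, hte⟩
      have ht0 : 0 ≤ p 3 := le_trans (abs_nonneg _) hyt
      refine ⟨hx, hz, ht0, hte, ?_⟩
      rw [hx] at heq
      rcases eq_or_lt_of_le ht0 with h0 | h0
      · have hy0 : p 1 = 0 := by
          rw [← h0] at hyt
          exact abs_eq_zero.1 (le_antisymm hyt (abs_nonneg _))
        left; rw [hy0, ← h0, Ex4.f_zero]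
      · have heq' : p 1 ^ 2 * p 3 ^ 2 = (p 1 ^ 2 - 2 * p 3 ^ 2) ^ 4 := by
          linear_combination heq
        have hf := Ex4.f_eq_abs h0 ht1 hyt heq'
        rcases abs_choice (p 1) with h | h
        · left; rw [h] at hf; exact hf.symm
        · right; rw [h] at hf; linarith
    · rintro ⟨hx, hz, ht0, hte, hy⟩
      have ht1 : p 3 ≤ 1 := by linarith
      have hk := Ex4.key (t := p 3) ⟨ht0, ht1⟩
      have hy2 : p 1 ^ 2 = p 3 ^ 2 * Ex4.psi (p 3) := by
        rcases hy with h | h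
        · rw [h]; exact Ex4.f_sq
        · rw [h, neg_sq]; exact Ex4.f_sq
      have hyabs : |p 1| ≤ p 3 := by
        have hfle := Ex4.f_le (t := p 3) ht0
        have hfnn := Ex4.f_nonneg (t := p 3) ht0
        rcases hy with h | h
        · rw [h, abs_of_nonneg hfnn]; exact hfle
        · rw [h, abs_neg, abs_of_nonneg hfnn]; exact hfle
      refine ⟨⟨?_, hz, hyabs, ht1⟩, hx, hte⟩
      rw [hx, hy2]
      linear_combination -(p 3) ^ 4 * hk
  · have hψ : Tendsto Ex4.psi (nhdsWithin 0 (Set.Ioi (0:ℝ))) (nhds 0) := by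
      have h1 := Ex4.psi_continuous.tendsto 0
      rw [Ex4.psi_zero] at h1
      exact h1.mono_left nhdsWithin_le_nhds
    have h4 : Tendsto (fun t => (2 - Ex4.psi t) ^ 2) (nhdsWithin 0 (Set.Ioi (0:ℝ)))
        (nhds 4) := by
      have h2 := ((tendsto_const_nhds (x := (2:ℝ))).sub hψ).pow 2
      norm_num at h2
      exact h2
    apply h4.congr'
    have hmem : Set.Ioo (0:ℝ) 1 ∈ nhdsWithin 0 (Set.Ioi (0:ℝ)) :=
      Ioo_mem_nhdsGT_of_mem (by norm_num : (0:ℝ) ∈ Set.Ico (0:ℝ) 1)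
    filter_upwards [hmem] with t ht
    exact (Ex4.f_div_cube ht.1 ht.2.le).symm
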